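/- Let G be a finite group having a subgroup H of index 2 such that k(G) − k(H) ≥ 4. Then there exists a weight w on G such that no weight on G that is 𝒫-equivalent to w is gapless (i.e. G has an invariant metric that is not 𝒫-interval). -/
import Mathlib


/-- A weight on a group `G`: vanishes exactly at the identity, is symmetric
under inversion, and satisfies the triangle inequality. -/
def IsWeight {G : Type*} [Group G] (w : G → ℕ) : Prop :=
  (∀ x, w x = 0 ↔ x = 1) ∧ (∀ x, w x⁻¹ = w x) ∧ ∀ x y, w (x * y) ≤ w x + w y

/-- A weight is gapless if its set of values is an initial segment of `ℕ`. -/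
def Gapless {G : Type*} (w : G → ℕ) : Prop :=
  ∀ g : G, ∀ m : ℕ, m ≤ w g → ∃ h : G, w h = m

/-- Two weights are `𝒫`-equivalent if they induce the same partition of `G`
into level sets. -/
def PEquivW {G : Type*} (w w' : G → ℕ) : Prop :=
  ∀ g h : G, w g = w h ↔ w' g = w' h

/-- For a finite group `G`, `kOf G = (|G| + #{x : x² = 1})/2 - 1`, the number
of non-trivial parts of the finest unitary symmetric partition of `G`. -/
noncomputable def kOf (G : Type*) [Group G] : ℕ :=
  (Nat.card G + Nat.card {x : G // x ^ 2 = 1}) / 2 - 1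

section AuxNPI
variable {G : Type*} [Group G] [DecidableEq G]

/-- For an inverse-closed finset, `|S| + #involutions in S` is even. -/
lemma auxNPI_even (S : Finset G) (hinv : ∀ x ∈ S, x⁻¹ ∈ S) :
    2 ∣ S.card + (S.filter fun x => x * x = 1).card := by
  induction S using Finset.strongInduction with
  | _ S ih =>
    rcases S.eq_empty_or_nonempty with rfl | ⟨x, hx⟩
    · simp
    · have hxi : x⁻¹ ∈ S := hinv x hx
      by_cases h2 : x * x = 1
      · have hxx : x⁻¹ = x := inv_eq_of_mul_eq_one_right h2
        set S' := S.erase x with hS'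
        have hss : S' ⊂ S := Finset.erase_ssubset hx
        have hinv' : ∀ y ∈ S', y⁻¹ ∈ S' := by
          intro y hy
          rw [Finset.mem_erase] at hy ⊢
          exact ⟨fun e => hy.1 ((inv_eq_iff_eq_inv.1 e).trans hxx), hinv y hy.2⟩
        have hd := ih S' hss hinv'
        have hc : S'.card + 1 = S.card := Finset.card_erase_add_one hx
        have hf : (S'.filter fun x => x * x = 1) = (S.filter fun x => x * x = 1).erase x :=
          Finset.filter_erase _ _ _
        have hxf : x ∈ S.filter fun x => x * x = 1 := Finset.mem_filter.2 ⟨hx, h2⟩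
        have hfc : ((S.filter fun x => x * x = 1).erase x).card + 1
            = (S.filter fun x => x * x = 1).card := Finset.card_erase_add_one hxf
        rw [hf] at hd
        omega
      · have hxx : x⁻¹ ≠ x := fun e => h2 (by nth_rewrite 1 [← e]; exact inv_mul_cancel x)
        set S' := (S.erase x).erase x⁻¹ with hS'
        have hss : S' ⊂ S :=
          lt_of_le_of_lt (Finset.erase_subset _ _) (Finset.erase_ssubset hx)
        have hinv' : ∀ y ∈ S', y⁻¹ ∈ S' := by
          intro y hy
          rw [Finset.mem_erase, Finset.mem_erase] at hy ⊢
          refine ⟨fun e => hy.2.1 (inv_injective e), fun e => hy.1 (inv_eq_iff_eq_inv.1 e), hinv y hy.2.2⟩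
        have hd := ih S' hss hinv'
        have hxi' : x⁻¹ ∈ S.erase x := Finset.mem_erase.2 ⟨hxx, hxi⟩
        have hc1 : S'.card + 1 = (S.erase x).card := Finset.card_erase_add_one hxi'
        have hc2 : (S.erase x).card + 1 = S.card := Finset.card_erase_add_one hx
        have hxnf : x ∉ S.filter fun x => x * x = 1 := fun h => h2 (Finset.mem_filter.1 h).2
        have hxinf : x⁻¹ ∉ (S.filter fun x => x * x = 1) := by
          intro h
          have h3 := (Finset.mem_filter.1 h).2
          have e1 : x = x⁻¹ := by
            have := inv_eq_of_mul_eq_one_right h3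
            rwa [inv_inv] at this
          exact h2 (by nth_rewrite 2 [e1]; exact mul_inv_cancel x)
        have hf : (S'.filter fun x => x * x = 1) = S.filter fun x => x * x = 1 := by
          rw [hS', Finset.filter_erase, Finset.filter_erase,
            Finset.erase_eq_of_notMem hxnf, Finset.erase_eq_of_notMem hxinf]
        rw [hf] at hd
        omega

/-- From an inverse-closed finset with `|S| + #involutions ≥ 2k` one can extract
`k` elements pairwise distinct and pairwise non-inverse. -/
lemma auxNPI_extract (k : ℕ) (S : Finset G) (hinv : ∀ x ∈ S, x⁻¹ ∈ S)
    (hc : 2 * k ≤ S.card + (S.filter fun x => x * x = 1).card) :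
    ∃ l : List G, l.length = k ∧ (∀ x ∈ l, x ∈ S) ∧
      l.Pairwise fun x y => x ≠ y ∧ x ≠ y⁻¹ := by
  induction k generalizing S with
  | zero => exact ⟨[], rfl, by simp, List.Pairwise.nil⟩
  | succ k ih =>
    have hfs : (S.filter fun x => x * x = 1).card ≤ S.card :=
      Finset.card_le_card (Finset.filter_subset _ _)
    have hS : S.Nonempty := by
      rw [← Finset.card_pos]; omega
    obtain ⟨x, hx⟩ := hS
    have hxi : x⁻¹ ∈ S := hinv x hx
    have hinv' : ∀ y ∈ (S.erase x).erase x⁻¹, y⁻¹ ∈ (S.erase x).erase x⁻¹ := by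
      intro y hy
      rw [Finset.mem_erase, Finset.mem_erase] at hy ⊢
      refine ⟨fun e => hy.2.1 (inv_injective e), fun e => hy.1 (inv_eq_iff_eq_inv.1 e), hinv y hy.2.2⟩
    have hc' : 2 * k ≤ ((S.erase x).erase x⁻¹).card
        + (((S.erase x).erase x⁻¹).filter fun x => x * x = 1).card := by
      by_cases h2 : x * x = 1
      · have hxx : x⁻¹ = x := inv_eq_of_mul_eq_one_right h2
        rw [hxx, Finset.erase_idem]
        have hc1 : (S.erase x).card + 1 = S.card := Finset.card_erase_add_one hx
        have hf : ((S.erase x).filter fun x => x * x = 1)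
            = (S.filter fun x => x * x = 1).erase x := Finset.filter_erase _ _ _
        have hxf : x ∈ S.filter fun x => x * x = 1 := Finset.mem_filter.2 ⟨hx, h2⟩
        have hfc : ((S.filter fun x => x * x = 1).erase x).card + 1
            = (S.filter fun x => x * x = 1).card := Finset.card_erase_add_one hxf
        rw [hf]
        omega
      · have hxx : x⁻¹ ≠ x := fun e => h2 (by nth_rewrite 1 [← e]; exact inv_mul_cancel x)
        have hxi' : x⁻¹ ∈ S.erase x := Finset.mem_erase.2 ⟨hxx, hxi⟩
        have hc1 : ((S.erase x).erase x⁻¹).card + 1 = (S.erase x).card :=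
          Finset.card_erase_add_one hxi'
        have hc2 : (S.erase x).card + 1 = S.card := Finset.card_erase_add_one hx
        have hxnf : x ∉ S.filter fun x => x * x = 1 := fun h => h2 (Finset.mem_filter.1 h).2
        have hxinf : x⁻¹ ∉ (S.filter fun x => x * x = 1) := by
          intro h
          have h3 := (Finset.mem_filter.1 h).2
          have e1 : x = x⁻¹ := by
            have := inv_eq_of_mul_eq_one_right h3
            rwa [inv_inv] at this
          exact h2 (by nth_rewrite 2 [e1]; exact mul_inv_cancel x)
        have hf : (((S.erase x).erase x⁻¹).filter fun x => x * x = 1)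
            = S.filter fun x => x * x = 1 := by
          rw [Finset.filter_erase, Finset.filter_erase,
            Finset.erase_eq_of_notMem hxnf, Finset.erase_eq_of_notMem hxinf]
        rw [hf]
        omega
    obtain ⟨l, hl, hmem, hpw⟩ := ih _ hinv' hc'
    refine ⟨x :: l, by simp [hl], ?_, ?_⟩
    · intro y hy
      rcases List.mem_cons.1 hy with rfl | hy
      · exact hx
      · exact (Finset.erase_subset _ _) ((Finset.erase_subset _ _) (hmem y hy))
    · refine List.Pairwise.cons ?_ hpw
      intro y hy
      have hyS := hmem y hy
      rw [Finset.mem_erase, Finset.mem_erase] at hyS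
      exact ⟨fun e => hyS.2.1 e.symm, fun e => hyS.1 (by rw [e, inv_inv])⟩

end AuxNPI

/-- The final finite arithmetic contradiction. -/
lemma auxNPI_arith (a b1 b2 b3 b4 : ℕ)
    (dab1 : a ≠ b1) (dab2 : a ≠ b2) (dab3 : a ≠ b3) (dab4 : a ≠ b4)
    (db12 : b1 ≠ b2) (db13 : b1 ≠ b3) (db14 : b1 ≠ b4)
    (db23 : b2 ≠ b3) (db24 : b2 ≠ b4) (db34 : b3 ≠ b4)
    (ha0 : a ≠ 0) (h10 : b1 ≠ 0) (h20 : b2 ≠ 0) (h30 : b3 ≠ 0) (h40 : b4 ≠ 0)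
    (hma : a ≤ 5) (hm1 : b1 ≤ 5) (hm2 : b2 ≤ 5) (hm3 : b3 ≤ 5) (hm4 : b4 ≤ 5)
    (ha12 : a ≤ b1 + b2) (ha13 : a ≤ b1 + b3) (ha14 : a ≤ b1 + b4)
    (ha23 : a ≤ b2 + b3) (ha24 : a ≤ b2 + b4) (ha34 : a ≤ b3 + b4)
    (hd12 : b1 ≤ b2 + a) (hd13 : b1 ≤ b3 + a) (hd14 : b1 ≤ b4 + a)
    (hd21 : b2 ≤ b1 + a) (hd23 : b2 ≤ b3 + a) (hd24 : b2 ≤ b4 + a)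
    (hd31 : b3 ≤ b1 + a) (hd32 : b3 ≤ b2 + a) (hd34 : b3 ≤ b4 + a)
    (hd41 : b4 ≤ b1 + a) (hd42 : b4 ≤ b2 + a) (hd43 : b4 ≤ b3 + a) : False := by
  omega

set_option maxHeartbeats 1600000 in
/-- If a finite group `G` has a subgroup `H` of index 2 with `k(G) - k(H) ≥ 4`,
then `G` has a weight no `𝒫`-equivalent weight of which is gapless. -/
theorem non_pinterval_of_index_two_subgroup {G : Type*} [Group G] [Finite G]
    (H : Subgroup G) (hidx : H.index = 2) (hk : 4 ≤ kOf G - kOf H) :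
    ∃ w : G → ℕ, IsWeight w ∧
      ∀ w' : G → ℕ, IsWeight w' → PEquivW w w' → ¬ Gapless w' := by
  classical
  letI := Fintype.ofFinite G
  set A : Finset G := Finset.univ.filter (· ∈ H) with hAdef
  set T : Finset G := Finset.univ.filter (· ∉ H) with hTdef
  have hsplitG : A.card + T.card = Fintype.card G := by
    rw [hAdef, hTdef, ← Finset.card_univ]
    exact Finset.card_filter_add_card_filter_not _
  have hAcard : A.card = Nat.card H := by
    rw [Nat.card_eq_fintype_card, hAdef, ← Fintype.card_subtype]
  have hGcard : Fintype.card G = 2 * Nat.card H := by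
    rw [← Nat.card_eq_fintype_card, ← H.index_mul_card, hidx]
  have htG : Nat.card {x : G // x ^ 2 = 1} = (Finset.univ.filter fun x : G => x * x = 1).card := by
    rw [Nat.card_eq_fintype_card, ← Fintype.card_subtype]
    apply Fintype.card_congr
    apply Equiv.subtypeEquivRight
    intro x; rw [pow_two]
  have eH : {x : ↥H // x ^ 2 = 1} ≃ {x : G // x ∈ H ∧ x * x = 1} :=
    { toFun := fun a => ⟨a.1.1, a.1.2, by
        have := a.2
        rw [pow_two, Subtype.ext_iff] at this
        simpa using this⟩
      invFun := fun a => ⟨⟨a.1, a.2.1⟩, by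
        rw [pow_two, Subtype.ext_iff]
        simpa using a.2.2⟩
      left_inv := fun a => by ext; rfl
      right_inv := fun a => by ext; rfl }
  have htH : Nat.card {x : ↥H // x ^ 2 = 1} = (A.filter fun x => x * x = 1).card := by
    rw [Nat.card_congr eH, Nat.card_eq_fintype_card, Fintype.card_subtype, hAdef,
      Finset.filter_filter]
  have hsplitI : (A.filter fun x => x * x = 1).card + (T.filter fun x => x * x = 1).card
      = (Finset.univ.filter fun x : G => x * x = 1).card := by
    have h1 : (A.filter fun x => x * x = 1)
        = (Finset.univ.filter fun x : G => x * x = 1).filter (· ∈ H) := by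
      rw [hAdef, Finset.filter_filter, Finset.filter_filter]
      apply Finset.filter_congr; intro x _; tauto
    have h2 : (T.filter fun x => x * x = 1)
        = (Finset.univ.filter fun x : G => x * x = 1).filter (fun x => ¬ (x ∈ H)) := by
      rw [hTdef, Finset.filter_filter, Finset.filter_filter]
      apply Finset.filter_congr; intro x _; tauto
    rw [h1, h2]
    exact Finset.card_filter_add_card_filter_not _
  have hkG : kOf G = (A.card + T.card + ((A.filter fun x => x * x = 1).card
      + (T.filter fun x => x * x = 1).card)) / 2 - 1 := by
    rw [kOf, htG, hsplitI, Nat.card_eq_fintype_card, hsplitG]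
  have hkH : kOf H = (A.card + (A.filter fun x => x * x = 1).card) / 2 - 1 := by
    rw [kOf, htH, hAcard]
  have hinvA : ∀ x ∈ A, x⁻¹ ∈ A := by
    intro x hxm
    rw [hAdef, Finset.mem_filter] at hxm ⊢
    exact ⟨Finset.mem_univ _, H.inv_mem hxm.2⟩
  have hinvT : ∀ x ∈ T, x⁻¹ ∈ T := by
    intro x hxm
    rw [hTdef, Finset.mem_filter] at hxm ⊢
    refine ⟨Finset.mem_univ _, fun h => hxm.2 ?_⟩
    simpa using H.inv_mem h
  have hevenA := auxNPI_even A hinvA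
  have hevenT := auxNPI_even T hinvT
  have h1A : (1 : G) ∈ A := by
    rw [hAdef, Finset.mem_filter]; exact ⟨Finset.mem_univ _, H.one_mem⟩
  have h1Af : (1 : G) ∈ A.filter fun x => x * x = 1 :=
    Finset.mem_filter.2 ⟨h1A, by simp⟩
  have hposA : 0 < A.card := Finset.card_pos.2 ⟨1, h1A⟩
  have hposAf : 0 < (A.filter fun x => x * x = 1).card := Finset.card_pos.2 ⟨1, h1Af⟩
  have hbig : 8 ≤ T.card + (T.filter fun x => x * x = 1).card := by
    rw [hkG, hkH] at hk
    omega
  obtain ⟨l, hlen, hmem, hpw⟩ := auxNPI_extract 4 T hinvT (by omega)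
  rcases l with _ | ⟨x1, _ | ⟨x2, _ | ⟨x3, _ | ⟨x4, _ | ⟨x5, l⟩⟩⟩⟩⟩
  · simp at hlen
  · simp at hlen
  · simp at hlen
  · simp at hlen
  · -- the good case: l = [x1, x2, x3, x4]
    rcases hpw with _ | ⟨hr1, hpw⟩
    rcases hpw with _ | ⟨hr2, hpw⟩
    rcases hpw with _ | ⟨hr3, _⟩
    have r12 := hr1 x2 (by simp)
    have r13 := hr1 x3 (by simp)
    have r14 := hr1 x4 (by simp)
    have r23 := hr2 x3 (by simp)
    have r24 := hr2 x4 (by simp)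
    have r34 := hr3 x4 (by simp)
    have hx1T := hmem x1 (by simp)
    have hx2T := hmem x2 (by simp)
    have hx3T := hmem x3 (by simp)
    have hx4T := hmem x4 (by simp)
    rw [hTdef, Finset.mem_filter] at hx1T hx2T hx3T hx4T
    have hx1 : x1 ∉ H := hx1T.2
    have hx2 : x2 ∉ H := hx2T.2
    have hx3 : x3 ∉ H := hx3T.2
    have hx4 : x4 ∉ H := hx4T.2
    -- all the distinctness facts
    have n12 : x1 ≠ x2 := r12.1
    have m12 : x1 ≠ x2⁻¹ := r12.2
    have n13 : x1 ≠ x3 := r13.1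
    have m13 : x1 ≠ x3⁻¹ := r13.2
    have n14 : x1 ≠ x4 := r14.1
    have m14 : x1 ≠ x4⁻¹ := r14.2
    have n23 : x2 ≠ x3 := r23.1
    have m23 : x2 ≠ x3⁻¹ := r23.2
    have n24 : x2 ≠ x4 := r24.1
    have m24 : x2 ≠ x4⁻¹ := r24.2
    have n34 : x3 ≠ x4 := r34.1
    have m34 : x3 ≠ x4⁻¹ := r34.2
    have n21 : x2 ≠ x1 := n12.symm
    have n31 : x3 ≠ x1 := n13.symm
    have n41 : x4 ≠ x1 := n14.symm
    have n32 : x3 ≠ x2 := n23.symm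
    have n42 : x4 ≠ x2 := n24.symm
    have n43 : x4 ≠ x3 := n34.symm
    have m21 : x2 ≠ x1⁻¹ := fun e => m12 (by rw [e, inv_inv])
    have m31 : x3 ≠ x1⁻¹ := fun e => m13 (by rw [e, inv_inv])
    have m41 : x4 ≠ x1⁻¹ := fun e => m14 (by rw [e, inv_inv])
    have m32 : x3 ≠ x2⁻¹ := fun e => m23 (by rw [e, inv_inv])
    have m42 : x4 ≠ x2⁻¹ := fun e => m24 (by rw [e, inv_inv])
    have m43 : x4 ≠ x3⁻¹ := fun e => m34 (by rw [e, inv_inv])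
    have hx1ne1 : x1 ≠ 1 := fun e => hx1 (e ▸ H.one_mem)
    have hx2ne1 : x2 ≠ 1 := fun e => hx2 (e ▸ H.one_mem)
    have hx3ne1 : x3 ≠ 1 := fun e => hx3 (e ▸ H.one_mem)
    have hx4ne1 : x4 ≠ 1 := fun e => hx4 (e ▸ H.one_mem)
    -- the weight
    obtain ⟨w, hwdef⟩ : ∃ w : G → ℕ, w = fun g =>
        (if g = 1 then 0 else if g ∈ H then 4
        else if g = x1 ∨ g = x1⁻¹ then 10
        else if g = x2 ∨ g = x2⁻¹ then 11
        else if g = x3 ∨ g = x3⁻¹ then 12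
        else 13) := ⟨_, rfl⟩
    have hw0 : ∀ g, w g = 0 ↔ g = 1 := by
      intro g
      constructor
      · intro h
        by_contra hg
        simp only [hwdef] at h
        rw [if_neg hg] at h
        split_ifs at h <;> omega
      · intro h; simp [hwdef, h]
    have hwH : ∀ g, g ∈ H → g ≠ 1 → w g = 4 := by
      intro g hgH hg1
      simp only [hwdef]
      rw [if_neg hg1, if_pos hgH]
    have hwnH : ∀ g, g ∉ H → 10 ≤ w g ∧ w g ≤ 13 := by
      intro g hgH
      have hg1 : g ≠ 1 := fun e => hgH (e ▸ H.one_mem)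
      simp only [hwdef]
      rw [if_neg hg1, if_neg hgH]
      split_ifs <;> omega
    have hvals : ∀ g, w g = 0 ∨ w g = 4 ∨ w g = 10 ∨ w g = 11 ∨ w g = 12 ∨ w g = 13 := by
      intro g
      simp only [hwdef]
      split_ifs <;> simp
    have hwx1 : w x1 = 10 := by
      simp only [hwdef]
      rw [if_neg hx1ne1, if_neg hx1]
      simp
    have hwx2 : w x2 = 11 := by
      simp only [hwdef]
      rw [if_neg hx2ne1, if_neg hx2, if_neg (by push_neg; exact ⟨n21, m21⟩)]
      simp
    have hwx3 : w x3 = 12 := by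
      simp only [hwdef]
      rw [if_neg hx3ne1, if_neg hx3, if_neg (by push_neg; exact ⟨n31, m31⟩),
        if_neg (by push_neg; exact ⟨n32, m32⟩)]
      simp
    have hwx4 : w x4 = 13 := by
      simp only [hwdef]
      rw [if_neg hx4ne1, if_neg hx4, if_neg (by push_neg; exact ⟨n41, m41⟩),
        if_neg (by push_neg; exact ⟨n42, m42⟩), if_neg (by push_neg; exact ⟨n43, m43⟩)]
    -- symmetry
    have hiff : ∀ a g : G, (g⁻¹ = a ∨ g⁻¹ = a⁻¹) ↔ (g = a ∨ g = a⁻¹) := by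
      intro a g
      constructor
      · rintro (h | h)
        · exact Or.inr (by rw [← h, inv_inv])
        · exact Or.inl (inv_injective h)
      · rintro (h | h)
        · exact Or.inr (by rw [h])
        · exact Or.inl (by rw [h, inv_inv])
    have hsym : ∀ g, w g⁻¹ = w g := by
      intro g
      simp only [hwdef, inv_eq_one, inv_mem_iff, hiff]
    -- triangle inequality
    have htri : ∀ x y : G, w (x * y) ≤ w x + w y := by
      intro x y
      by_cases hxH : x ∈ H <;> by_cases hyH : y ∈ H
      · by_cases hx1' : x = 1
        · rw [hx1', one_mul, (hw0 1).2 rfl]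
          omega
        by_cases hy1' : y = 1
        · rw [hy1', mul_one, (hw0 1).2 rfl]
          omega
        have hxy : x * y ∈ H := H.mul_mem hxH hyH
        have h4 : w (x * y) ≤ 4 := by
          by_cases h : x * y = 1
          · rw [(hw0 _).2 h]; omega
          · rw [hwH _ hxy h]
        rw [hwH x hxH hx1', hwH y hyH hy1']
        omega
      · have hxy : x * y ∉ H := by
          intro h
          exact hyH (by simpa using H.mul_mem (H.inv_mem hxH) h)
        by_cases hx1' : x = 1
        · rw [hx1', one_mul, (hw0 1).2 rfl]
          omega
        · rw [hwH x hxH hx1']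
          have h1 := (hwnH _ hxy).2
          have h2 := (hwnH y hyH).1
          omega
      · have hxy : x * y ∉ H := by
          intro h
          exact hxH (by simpa using H.mul_mem h (H.inv_mem hyH))
        by_cases hy1' : y = 1
        · rw [hy1', mul_one, (hw0 1).2 rfl]
          omega
        · rw [hwH y hyH hy1']
          have h1 := (hwnH _ hxy).2
          have h2 := (hwnH x hxH).1
          omega
      · have hxy : x * y ∈ H :=
          (Subgroup.mul_mem_iff_of_index_two hidx).2 (iff_of_false hxH hyH)
        have h1 := (hwnH x hxH).1
        have h2 := (hwnH y hyH).1
        have h4 : w (x * y) ≤ 4 := by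
          by_cases h : x * y = 1
          · rw [(hw0 _).2 h]; omega
          · rw [hwH _ hxy h]
        omega
    refine ⟨w, ⟨hw0, hsym, htri⟩, ?_⟩
    rintro w' ⟨hz', _, ht'⟩ hP hg
    have hPt : ∀ g g' : G, w g = w g' → w' g = w' g' := fun g g' h => (hP g g').1 h
    -- the reference element of H \ {1}
    have hh0H : x1 * x2 ∈ H :=
      (Subgroup.mul_mem_iff_of_index_two hidx).2 (iff_of_false hx1 hx2)
    have hh0ne : x1 * x2 ≠ 1 := fun e => m21 (eq_inv_of_mul_eq_one_right e)
    have hwh0 : w (x1 * x2) = 4 := hwH _ hh0H hh0ne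
    -- positivity
    have ha0 : w' (x1 * x2) ≠ 0 := fun e => hh0ne ((hz' (x1 * x2)).1 e)
    have hb10 : w' x1 ≠ 0 := fun e => hx1ne1 ((hz' x1).1 e)
    have hb20 : w' x2 ≠ 0 := fun e => hx2ne1 ((hz' x2).1 e)
    have hb30 : w' x3 ≠ 0 := fun e => hx3ne1 ((hz' x3).1 e)
    have hb40 : w' x4 ≠ 0 := fun e => hx4ne1 ((hz' x4).1 e)
    -- distinctness
    have dab1 : w' (x1 * x2) ≠ w' x1 := fun e => by
      have := (hP (x1 * x2) x1).2 e; rw [hwh0, hwx1] at this; omega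
    have dab2 : w' (x1 * x2) ≠ w' x2 := fun e => by
      have := (hP (x1 * x2) x2).2 e; rw [hwh0, hwx2] at this; omega
    have dab3 : w' (x1 * x2) ≠ w' x3 := fun e => by
      have := (hP (x1 * x2) x3).2 e; rw [hwh0, hwx3] at this; omega
    have dab4 : w' (x1 * x2) ≠ w' x4 := fun e => by
      have := (hP (x1 * x2) x4).2 e; rw [hwh0, hwx4] at this; omega
    have db12 : w' x1 ≠ w' x2 := fun e => by
      have := (hP x1 x2).2 e; rw [hwx1, hwx2] at this; omega
    have db13 : w' x1 ≠ w' x3 := fun e => by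
      have := (hP x1 x3).2 e; rw [hwx1, hwx3] at this; omega
    have db14 : w' x1 ≠ w' x4 := fun e => by
      have := (hP x1 x4).2 e; rw [hwx1, hwx4] at this; omega
    have db23 : w' x2 ≠ w' x3 := fun e => by
      have := (hP x2 x3).2 e; rw [hwx2, hwx3] at this; omega
    have db24 : w' x2 ≠ w' x4 := fun e => by
      have := (hP x2 x4).2 e; rw [hwx2, hwx4] at this; omega
    have db34 : w' x3 ≠ w' x4 := fun e => by
      have := (hP x3 x4).2 e; rw [hwx3, hwx4] at this; omega
    -- range of w'
    have hrange : ∀ g : G, w' g = 0 ∨ w' g = w' (x1 * x2) ∨ w' g = w' x1 ∨ w' g = w' x2 ∨ w' g = w' x3 ∨ w' g = w' x4 := by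
      intro g
      rcases hvals g with h | h | h | h | h | h
      · exact Or.inl ((hz' g).2 ((hw0 g).1 h))
      · exact Or.inr (Or.inl (hPt g (x1 * x2) (by rw [h, hwh0])))
      · exact Or.inr (Or.inr (Or.inl (hPt g x1 (by rw [h, hwx1]))))
      · exact Or.inr (Or.inr (Or.inr (Or.inl (hPt g x2 (by rw [h, hwx2])))))
      · exact Or.inr (Or.inr (Or.inr (Or.inr (Or.inl (hPt g x3 (by rw [h, hwx3]))))))
      · exact Or.inr (Or.inr (Or.inr (Or.inr (Or.inr (hPt g x4 (by rw [h, hwx4]))))))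
    have hSmem : ∀ g : G, w' g ∈ ({0, w' (x1 * x2), w' x1, w' x2, w' x3, w' x4} : Finset ℕ) := by
      intro g
      rcases hrange g with h | h | h | h | h | h <;> (rw [h]; simp)
    have hS6 : ({0, w' (x1 * x2), w' x1, w' x2, w' x3, w' x4} : Finset ℕ).card ≤ 6 := by
      refine (Finset.card_insert_le _ _).trans (Nat.succ_le_succ ?_)
      refine (Finset.card_insert_le _ _).trans (Nat.succ_le_succ ?_)
      refine (Finset.card_insert_le _ _).trans (Nat.succ_le_succ ?_)
      refine (Finset.card_insert_le _ _).trans (Nat.succ_le_succ ?_)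
      refine (Finset.card_insert_le _ _).trans (Nat.succ_le_succ ?_)
      simp
    have hmax : ∀ g : G, w' g ≤ 5 := by
      intro g
      by_contra hc6
      push_neg at hc6
      have hsub : Finset.range 7 ⊆ ({0, w' (x1 * x2), w' x1, w' x2, w' x3, w' x4} : Finset ℕ) := by
        intro m hm
        rw [Finset.mem_range] at hm
        obtain ⟨h, hh⟩ := hg g m (by omega)
        rw [← hh]
        exact hSmem h
      have := Finset.card_le_card hsub
      rw [Finset.card_range] at this
      omega
    have hma : w' (x1 * x2) ≤ 5 := hmax (x1 * x2)
    have hmb1 : w' x1 ≤ 5 := hmax x1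
    have hmb2 : w' x2 ≤ 5 := hmax x2
    have hmb3 : w' x3 ≤ 5 := hmax x3
    have hmb4 : w' x4 ≤ 5 := hmax x4
    -- triangle constraints
    have habove : ∀ u v : G, u ∉ H → v ∉ H → v ≠ u⁻¹ → w' (x1 * x2) ≤ w' u + w' v := by
      intro u v hu hv hne
      have hm : u * v ∈ H := (Subgroup.mul_mem_iff_of_index_two hidx).2 (iff_of_false hu hv)
      have h1 : u * v ≠ 1 := fun e => hne (eq_inv_of_mul_eq_one_right e)
      have hval : w' (u * v) = w' (x1 * x2) := hPt _ (x1 * x2) (by rw [hwH _ hm h1, hwh0])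
      calc w' (x1 * x2) = w' (u * v) := hval.symm
        _ ≤ w' u + w' v := ht' u v
    have hdiff : ∀ u v : G, u ∉ H → v ∉ H → u ≠ v → w' u ≤ w' v + w' (x1 * x2) := by
      intro u v hu hv hne
      have hvinv : v⁻¹ ∉ H := fun h => hv (by simpa using H.inv_mem h)
      have hm : v⁻¹ * u ∈ H := (Subgroup.mul_mem_iff_of_index_two hidx).2 (iff_of_false hvinv hu)
      have h1 : v⁻¹ * u ≠ 1 := fun e => hne (inv_mul_eq_one.1 e).symm
      have hval : w' (v⁻¹ * u) = w' (x1 * x2) := hPt _ (x1 * x2) (by rw [hwH _ hm h1, hwh0])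
      have h2 := ht' v (v⁻¹ * u)
      rw [mul_inv_cancel_left, hval] at h2
      exact h2
    have ha12 : w' (x1 * x2) ≤ w' x1 + w' x2 := habove x1 x2 hx1 hx2 m21
    have ha13 : w' (x1 * x2) ≤ w' x1 + w' x3 := habove x1 x3 hx1 hx3 m31
    have ha14 : w' (x1 * x2) ≤ w' x1 + w' x4 := habove x1 x4 hx1 hx4 m41
    have ha23 : w' (x1 * x2) ≤ w' x2 + w' x3 := habove x2 x3 hx2 hx3 m32
    have ha24 : w' (x1 * x2) ≤ w' x2 + w' x4 := habove x2 x4 hx2 hx4 m42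
    have ha34 : w' (x1 * x2) ≤ w' x3 + w' x4 := habove x3 x4 hx3 hx4 m43
    have hd12 : w' x1 ≤ w' x2 + w' (x1 * x2) := hdiff x1 x2 hx1 hx2 n12
    have hd13 : w' x1 ≤ w' x3 + w' (x1 * x2) := hdiff x1 x3 hx1 hx3 n13
    have hd14 : w' x1 ≤ w' x4 + w' (x1 * x2) := hdiff x1 x4 hx1 hx4 n14
    have hd21 : w' x2 ≤ w' x1 + w' (x1 * x2) := hdiff x2 x1 hx2 hx1 n21
    have hd23 : w' x2 ≤ w' x3 + w' (x1 * x2) := hdiff x2 x3 hx2 hx3 n23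
    have hd24 : w' x2 ≤ w' x4 + w' (x1 * x2) := hdiff x2 x4 hx2 hx4 n24
    have hd31 : w' x3 ≤ w' x1 + w' (x1 * x2) := hdiff x3 x1 hx3 hx1 n31
    have hd32 : w' x3 ≤ w' x2 + w' (x1 * x2) := hdiff x3 x2 hx3 hx2 n32
    have hd34 : w' x3 ≤ w' x4 + w' (x1 * x2) := hdiff x3 x4 hx3 hx4 n34
    have hd41 : w' x4 ≤ w' x1 + w' (x1 * x2) := hdiff x4 x1 hx4 hx1 n41
    have hd42 : w' x4 ≤ w' x2 + w' (x1 * x2) := hdiff x4 x2 hx4 hx2 n42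
    have hd43 : w' x4 ≤ w' x3 + w' (x1 * x2) := hdiff x4 x3 hx4 hx3 n43
    exact auxNPI_arith _ _ _ _ _ dab1 dab2 dab3 dab4 db12 db13 db14 db23 db24 db34
      ha0 hb10 hb20 hb30 hb40 hma hmb1 hmb2 hmb3 hmb4
      ha12 ha13 ha14 ha23 ha24 ha34
      hd12 hd13 hd14 hd21 hd23 hd24 hd31 hd32 hd34 hd41 hd42 hd43
  · simp at hlen
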